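/- Let p ≥ 1, let C be a p×p real matrix all of whose entries are strictly positive, let α > 0 and let v ∈ ℝ^p be a vector with all coordinates strictly positive satisfying C·v = α·v. Then every eigenvalue μ ∈ ℂ of the complexification of C (the matrix obtained by mapping each real entry of C into ℂ) with μ ≠ α satisfies |μ| < α; in other words, α is the unique eigenvalue of maximal modulus of C. -/

import Mathlib

open Matrix Finset
open scoped ComplexOrder

/-- **Perron–Frobenius: the positive eigenvalue dominates.** If `C` is a real
matrix with strictly positive entries, `α > 0` and `v` is a strictly positive
eigenvector with `C v = α v`, then every complex eigenvalue `μ ≠ α` of the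
complexification of `C` (i.e. every root of its characteristic polynomial)
satisfies `|μ| < α`. -/
theorem positive_matrix_eigenvalue_dominates
    (p : ℕ) (hp : 1 ≤ p) (C : Matrix (Fin p) (Fin p) ℝ)
    (hC : ∀ i j, 0 < C i j)
    (α : ℝ) (hα : 0 < α) (v : Fin p → ℝ) (hv : ∀ i, 0 < v i)
    (heig : C.mulVec v = α • v) :
    ∀ μ : ℂ, ((C.map (algebraMap ℝ ℂ)).charpoly).IsRoot μ → μ ≠ (α : ℂ) →
      ‖μ‖ < α := by
  intro μ hroot hμne
  set C' : Matrix (Fin p) (Fin p) ℂ := C.map (algebraMap ℝ ℂ) with hC'def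
  have hC'app : ∀ i j, C' i j = (C i j : ℂ) := by
    intro i j; simp [hC'def, Matrix.map_apply]
  -- Step 1: obtain an eigenvector
  have hdet : (μ • (1 : Matrix (Fin p) (Fin p) ℂ) - C').det = 0 := by
    have h1 : ((C'.charmatrix).map (Polynomial.evalRingHom μ)).det = 0 := by
      have h0 := (RingHom.map_det (Polynomial.evalRingHom μ) C'.charmatrix).symm
      rw [RingHom.mapMatrix_apply] at h0
      rw [h0]
      exact hroot
    have h2 : (C'.charmatrix).map (Polynomial.evalRingHom μ)
        = μ • (1 : Matrix (Fin p) (Fin p) ℂ) - C' := by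
      ext i j
      by_cases h : i = j <;>
        simp [h, Matrix.charmatrix_apply, Matrix.one_apply, Matrix.diagonal_apply,
          Matrix.map_apply, Matrix.sub_apply, Matrix.smul_apply]
    rwa [h2] at h1
  obtain ⟨w, hw0, hww⟩ := (Matrix.exists_mulVec_eq_zero_iff).2 hdet
  have heigw : C'.mulVec w = μ • w := by
    rw [sub_mulVec, smul_mulVec, one_mulVec, sub_eq_zero] at hww
    exact hww.symm
  have hsum : ∀ i, ∑ j, (C i j : ℂ) * w j = μ * w i := by
    intro i
    have := congrFun heigw i
    simpa [Matrix.mulVec, dotProduct, hC'app] using this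
  -- Step 2: the max of |w i| / v i
  have hpne : Nonempty (Fin p) := ⟨⟨0, hp⟩⟩
  obtain ⟨i₀, -, hi₀⟩ := Finset.exists_max_image Finset.univ
    (fun i => ‖w i‖ / v i) Finset.univ_nonempty
  set t : ℝ := ‖w i₀‖ / v i₀ with ht
  have hle : ∀ j, ‖w j‖ ≤ t * v j := by
    intro j
    have h := hi₀ j (mem_univ j)
    calc ‖w j‖ = ‖w j‖ / v j * v j :=
          (div_mul_cancel₀ _ (hv j).ne').symm
      _ ≤ t * v j := mul_le_mul_of_nonneg_right h (hv j).le
  have hwi₀ : ‖w i₀‖ = t * v i₀ := by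
    rw [ht]; exact (div_mul_cancel₀ _ (hv i₀).ne').symm
  have htpos : 0 < t := by
    obtain ⟨j, hj⟩ := Function.ne_iff.1 hw0
    have h1 : 0 < ‖w j‖ := by simpa using hj
    have h2 := hle j
    nlinarith [hv j]
  have hEpos : 0 < t * v i₀ := mul_pos htpos (hv i₀)
  -- Step 3: the inequality chain at i₀
  have hCv : ∑ j, C i₀ j * v j = α * v i₀ := by
    have := congrFun heig i₀
    simpa [Matrix.mulVec, dotProduct] using this
  have habs1 : ‖μ * w i₀‖ ≤ ∑ j, C i₀ j * ‖w j‖ := by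
    rw [← hsum i₀]
    refine (norm_sum_le _ _).trans_eq ?_
    refine Finset.sum_congr rfl fun j _ => ?_
    rw [norm_mul, Complex.norm_real, Real.norm_eq_abs, abs_of_pos (hC i₀ j)]
  have habs2 : ∑ j, C i₀ j * ‖w j‖ ≤ ∑ j, C i₀ j * (t * v j) :=
    Finset.sum_le_sum fun j _ => mul_le_mul_of_nonneg_left (hle j) (hC i₀ j).le
  have habs3 : ∑ j, C i₀ j * (t * v j) = α * (t * v i₀) := by
    have h : ∑ j, C i₀ j * (t * v j) = t * ∑ j, C i₀ j * v j := by
      rw [Finset.mul_sum]; exact Finset.sum_congr rfl fun j _ => by ring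
    rw [h, hCv]; ring
  have hmw : ‖μ * w i₀‖ = ‖μ‖ * (t * v i₀) := by
    rw [norm_mul, hwi₀]
  have hμle : ‖μ‖ ≤ α := by
    have h := (habs1.trans habs2).trans_eq habs3
    rw [hmw] at h
    exact le_of_mul_le_mul_right h hEpos
  rcases lt_or_eq_of_le hμle with h | habsμ
  · exact h
  -- Step 4: equality case |μ| = α, derive contradiction
  exfalso
  have hE : ‖μ * w i₀‖ = α * (t * v i₀) := by rw [hmw, habsμ]
  -- termwise equality forces |w j| = t * v j
  have hsumeq : ∑ j, C i₀ j * ‖w j‖ = ∑ j, C i₀ j * (t * v j) := by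
    refine le_antisymm habs2 ?_
    rw [habs3, ← hE]; exact habs1
  have hterm : ∀ j, ‖w j‖ = t * v j := by
    intro j
    have h := (Finset.sum_eq_sum_iff_of_le
      (fun j _ => mul_le_mul_of_nonneg_left (hle j) (hC i₀ j).le)).1 hsumeq j (mem_univ j)
    exact mul_left_cancel₀ (hC i₀ j).ne' h
  -- triangle equality: all terms aligned with u
  set E : ℝ := α * (t * v i₀) with hEdef
  have hE0 : 0 < E := mul_pos hα hEpos
  set S : ℂ := μ * w i₀ with hSdef
  have hSabs : ‖S‖ = E := hE
  set u : ℂ := S / (E : ℂ) with hudef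
  have huabs : ‖u‖ = 1 := by
    rw [hudef, norm_div, hSabs, Complex.norm_real, Real.norm_eq_abs, abs_of_pos hE0, div_self hE0.ne']
  have hEcne : ((E : ℝ) : ℂ) ≠ 0 := by exact_mod_cast hE0.ne'
  have hSu : S = (E : ℂ) * u := by
    rw [hudef]; field_simp
  -- the functions
  set z : Fin p → ℂ := fun j => (C i₀ j : ℂ) * w j with hzdef
  have hzsum : ∑ j, z j = S := hsum i₀
  have hzabs : ∀ j, ‖z j‖ = C i₀ j * (t * v j) := by
    intro j
    rw [hzdef]
    simp only
    rw [norm_mul, Complex.norm_real, Real.norm_eq_abs, abs_of_pos (hC i₀ j), hterm j]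
  set f : Fin p → ℂ := fun j => (starRingEnd ℂ) u * z j with hfdef
  have hfsum : ∑ j, f j = (E : ℂ) := by
    rw [hfdef]
    simp only
    rw [← Finset.mul_sum, hzsum, hSu, mul_comm ((E:ℂ)) u, ← mul_assoc]
    rw [mul_comm ((starRingEnd ℂ) u) u, Complex.mul_conj]
    rw [Complex.normSq_eq_norm_sq, huabs]
    norm_num
  have hfabs : ∀ j, ‖f j‖ = ‖z j‖ := by
    intro j
    rw [hfdef]
    simp only
    rw [norm_mul, Complex.norm_conj, huabs, one_mul]
  have hresum : ∑ j, (f j).re = ∑ j, ‖z j‖ := by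
    have h1 : ∑ j, (f j).re = E := by
      rw [← Complex.re_sum, hfsum, Complex.ofReal_re]
    have h2 : ∑ j, ‖z j‖ = E := by
      calc ∑ j, ‖z j‖ = ∑ j, C i₀ j * (t * v j) :=
            Finset.sum_congr rfl fun j _ => hzabs j
        _ = E := by rw [habs3]
    rw [h1, h2]
  have hrele : ∀ j, (f j).re ≤ ‖z j‖ := fun j =>
    (Complex.re_le_norm _).trans_eq (hfabs j)
  have hre : ∀ j, (f j).re = ‖z j‖ := by
    intro j
    exact (Finset.sum_eq_sum_iff_of_le (fun j _ => hrele j)).1 hresum j (mem_univ j)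
  -- alignment at i₀
  have hfi₀ : f i₀ = (‖z i₀‖ : ℂ) := by
    have h0 : (0:ℂ) ≤ f i₀ := Complex.re_eq_norm.1 (by rw [hre i₀, hfabs i₀])
    have him : (f i₀).im = 0 := ((Complex.nonneg_iff).1 h0).2.symm
    apply Complex.ext
    · rw [hre i₀, Complex.ofReal_re]
    · rw [him, Complex.ofReal_im]
  have hu0 : u ≠ 0 := by
    intro h; rw [h] at huabs; simp at huabs
  have huu : u * (starRingEnd ℂ) u = 1 := by
    rw [Complex.mul_conj, Complex.normSq_eq_norm_sq, huabs]; norm_num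
  have hwi₀' : w i₀ = u * ((t * v i₀ : ℝ) : ℂ) := by
    have h1 : u * f i₀ = z i₀ := by
      rw [hfdef]; simp only; rw [← mul_assoc, huu, one_mul]
    rw [hfi₀, hzabs i₀] at h1
    have hz : z i₀ = (C i₀ i₀ : ℂ) * w i₀ := rfl
    rw [hz] at h1
    have h2 : (C i₀ i₀ : ℂ) ≠ 0 := by
      exact_mod_cast (hC i₀ i₀).ne'
    apply mul_left_cancel₀ h2
    rw [← h1]
    push_cast
    ring
  -- conclude μ = α
  have hEc : ((E : ℝ) : ℂ) = (α : ℂ) * ((t * v i₀ : ℝ) : ℂ) := by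
    rw [hEdef]; push_cast; ring
  have hfin : μ * (u * ((t * v i₀ : ℝ) : ℂ)) = (α : ℂ) * (u * ((t * v i₀ : ℝ) : ℂ)) := by
    have h3 : μ * w i₀ = (E : ℂ) * u := hSu
    rw [hwi₀'] at h3
    rw [h3, hEc]; ring
  have hne : u * ((t * v i₀ : ℝ) : ℂ) ≠ 0 := by
    apply mul_ne_zero hu0
    exact_mod_cast hEpos.ne'
  exact hμne (mul_right_cancel₀ hne hfin)
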